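/- (Saddle-point property) Suppose σ̄ ≥ 0, G(σ̄) = Q + σ̄L₀ is positive definite, x̄ = G(σ̄)⁻¹c satisfies x̄ᵀL₀x̄ ≤ 0, and σ̄ · (x̄ᵀL₀x̄) = 0. Then (x̄, σ̄) is a saddle point of the total complementary function Ξ on ℝⁿ × [0, ∞): for every x ∈ ℝⁿ and every σ ≥ 0, Ξ(x̄, σ) ≤ Ξ(x̄, σ̄) ≤ Ξ(x, σ̄). -/

import Mathlib

open Matrix

/-- The Lorentz matrix `L₀ = diag(−1, I_{n−1})`. -/
noncomputable def L0 (n : ℕ) [NeZero n] : Matrix (Fin n) (Fin n) ℝ :=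
  Matrix.diagonal (fun i => if i = 0 then (-1 : ℝ) else 1)

/-- The Lorentz cone `C = {x : ‖x₂‖ ≤ x₁, x₁ > 0}`, with the Euclidean norm of the
tail written as the square root of the sum of squares. -/
noncomputable def lorentzCone (n : ℕ) [NeZero n] : Set (Fin n → ℝ) :=
  {x | Real.sqrt (∑ i ∈ Finset.univ \ {(0 : Fin n)}, (x i) ^ 2) ≤ x 0 ∧ 0 < x 0}

/-- The primal objective `P(x) = ½ xᵀQx − cᵀx`. -/
noncomputable def Pobj (n : ℕ) (Q : Matrix (Fin n) (Fin n) ℝ) (c : Fin n → ℝ)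
    (x : Fin n → ℝ) : ℝ :=
  (1 / 2) * (x ⬝ᵥ (Q *ᵥ x)) - c ⬝ᵥ x

/-- `G(σ) = Q + σ L₀`. -/
noncomputable def Gm (n : ℕ) [NeZero n] (Q : Matrix (Fin n) (Fin n) ℝ) (σ : ℝ) :
    Matrix (Fin n) (Fin n) ℝ :=
  Q + σ • L0 n

/-- The total complementary function `Ξ(x, σ) = ½ xᵀG(σ)x − cᵀx`. -/
noncomputable def Xi (n : ℕ) [NeZero n] (Q : Matrix (Fin n) (Fin n) ℝ) (c : Fin n → ℝ)
    (x : Fin n → ℝ) (σ : ℝ) : ℝ :=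
  (1 / 2) * (x ⬝ᵥ ((Gm n Q σ) *ᵥ x)) - c ⬝ᵥ x

/-- The canonical dual objective `P^d(σ) = −½ cᵀG(σ)⁻¹c`. -/
noncomputable def Pd (n : ℕ) [NeZero n] (Q : Matrix (Fin n) (Fin n) ℝ) (c : Fin n → ℝ)
    (σ : ℝ) : ℝ :=
  -(1 / 2) * (c ⬝ᵥ ((Gm n Q σ)⁻¹ *ᵥ c))

/-- Saddle-point property: if `σ̄ ≥ 0`, `G(σ̄) ≻ 0`, `x̄ = G(σ̄)⁻¹c`
satisfies `x̄ᵀL₀x̄ ≤ 0` and `σ̄ · (x̄ᵀL₀x̄) = 0`, then `(x̄, σ̄)` is a saddle point of `Ξ`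
on `ℝⁿ × [0, ∞)`. -/
theorem saddle_point {n : ℕ} [NeZero n] (hn : 2 ≤ n)
    (Q : Matrix (Fin n) (Fin n) ℝ) (hQ : Q.IsSymm) (c : Fin n → ℝ)
    (σbar : ℝ) (hσ : 0 ≤ σbar) (hG : (Gm n Q σbar).PosDef)
    (xbar : Fin n → ℝ) (hx : xbar = (Gm n Q σbar)⁻¹ *ᵥ c)
    (hfeas : xbar ⬝ᵥ ((L0 n) *ᵥ xbar) ≤ 0)
    (hcomp : σbar * (xbar ⬝ᵥ ((L0 n) *ᵥ xbar)) = 0) :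
    ∀ (x : Fin n → ℝ) (σ : ℝ), 0 ≤ σ →
      Xi n Q c xbar σ ≤ Xi n Q c xbar σbar ∧ Xi n Q c xbar σbar ≤ Xi n Q c x σbar := by
  intro x σ hσ'
  set G := Gm n Q σbar with hGdef
  have hGsymm : G.IsSymm := by
    unfold G
    unfold Gm L0
    rw [Matrix.IsSymm]
    rw [Matrix.transpose_add, hQ, Matrix.transpose_smul, Matrix.diagonal_transpose]
  have hdet : IsUnit G.det := isUnit_iff_ne_zero.mpr (ne_of_gt hG.det_pos)
  have hGc : G *ᵥ xbar = c := by
    rw [hx, Matrix.mulVec_mulVec, Matrix.mul_nonsing_inv _ hdet, Matrix.one_mulVec]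
  have hsym : ∀ u v : Fin n → ℝ, u ⬝ᵥ (G *ᵥ v) = v ⬝ᵥ (G *ᵥ u) := by
    intro u v
    rw [Matrix.dotProduct_mulVec, ← Matrix.mulVec_transpose, hGsymm.eq,
      dotProduct_comm]
  have hcx : ∀ u : Fin n → ℝ, c ⬝ᵥ u = xbar ⬝ᵥ (G *ᵥ u) := by
    intro u
    rw [← hGc, dotProduct_comm, hsym]
  -- expand Xi at xbar for a general σ'
  have hXi : ∀ (u : Fin n → ℝ) (s : ℝ), Xi n Q c u s =
      (1 / 2) * (u ⬝ᵥ (Q *ᵥ u)) + (1 / 2) * s * (u ⬝ᵥ (L0 n *ᵥ u)) - c ⬝ᵥ u := by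
    intro u s
    unfold Xi Gm
    rw [Matrix.add_mulVec, dotProduct_add, Matrix.smul_mulVec,
      dotProduct_smul]
    simp [smul_eq_mul]
    ring
  constructor
  · rw [hXi, hXi]
    have h1 : (1/2) * σ * (xbar ⬝ᵥ (L0 n *ᵥ xbar)) ≤ 0 := by
      nlinarith
    have h2 : (1/2) * σbar * (xbar ⬝ᵥ (L0 n *ᵥ xbar)) = 0 := by
      nlinarith
    linarith
  · have hpsd := hG.posSemidef
    have key : 0 ≤ (x - xbar) ⬝ᵥ (G *ᵥ (x - xbar)) := by
      have := hpsd.dotProduct_mulVec_nonneg (x - xbar)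
      simpa using this
    have expand : (x - xbar) ⬝ᵥ (G *ᵥ (x - xbar)) =
        x ⬝ᵥ (G *ᵥ x) - 2 * (xbar ⬝ᵥ (G *ᵥ x)) + xbar ⬝ᵥ (G *ᵥ xbar) := by
      rw [Matrix.mulVec_sub, sub_dotProduct, dotProduct_sub,
        dotProduct_sub, hsym x xbar]
      ring
    unfold Xi
    rw [← hGdef, hcx x, hcx xbar]
    nlinarith [key, expand]
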